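/- arXiv:1405.4006 — 2 statements merged into one kernel-verified Lean document; each statement's English description precedes it below -/
import Mathlib

section
/- Let A : X ⇒ X and B : X ⇒ X be maximally monotone operators that are both 3* monotone. Then ran T_{(A,B)} ≃ (dom A − ran B) ∩ (ran A + dom B), i.e. the range of the Douglas–Rachford operator is nearly equal to this intersection of Minkowski difference and sum. -/
open Set Pointwise

/-- Domain of a set-valued operator. -/
def svDom {X : Type*} (A : X → Set X) : Set X := {x | (A x).Nonempty}

/-- Range of a set-valued operator. -/
def svRan {X : Type*} (A : X → Set X) : Set X := ⋃ x, A x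

/-- Monotonicity of a set-valued operator. -/
def IsMonotoneOp {X : Type*} [NormedAddCommGroup X] [InnerProductSpace ℝ X]
    (A : X → Set X) : Prop :=
  ∀ ⦃x u y v : X⦄, u ∈ A x → v ∈ A y → 0 ≤ (inner ℝ (x - y) (u - v) : ℝ)

/-- Maximal monotonicity of a set-valued operator. -/
def IsMaxMonotoneOp {X : Type*} [NormedAddCommGroup X] [InnerProductSpace ℝ X]
    (A : X → Set X) : Prop :=
  IsMonotoneOp A ∧
    ∀ x u : X, (∀ y v : X, v ∈ A y → 0 ≤ (inner ℝ (x - y) (u - v) : ℝ)) → u ∈ A x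

/-- `A` is 3* monotone (rectangular): for every `x ∈ dom A` and `v ∈ ran A`, the set
`{⟪x - z, v - w⟫ : (z,w) ∈ gra A}` is bounded below. -/
def Is3StarMonotoneOp {X : Type*} [NormedAddCommGroup X] [InnerProductSpace ℝ X]
    (A : X → Set X) : Prop :=
  ∀ x ∈ svDom A, ∀ v ∈ svRan A,
    BddBelow {r : ℝ | ∃ z w : X, w ∈ A z ∧ r = (inner ℝ (x - z) (v - w) : ℝ)}

/-- Two sets are nearly equal if they have the same closure and the same relative
(intrinsic) interior. -/
def NearEq {X : Type*} [NormedAddCommGroup X] [NormedSpace ℝ X] (C D : Set X) : Prop :=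
  closure C = closure D ∧ intrinsicInterior ℝ C = intrinsicInterior ℝ D

/-- `J` is the resolvent of `A`: the single-valued, everywhere-defined map with
`x - J x ∈ A (J x)` for all `x`. -/
def IsResolventOf {X : Type*} [NormedAddCommGroup X] (J : X → X) (A : X → Set X) : Prop :=
  ∀ x : X, x - J x ∈ A (J x)

/-- The Douglas–Rachford operator `T = Id - J_A + J_B ∘ (2 J_A - Id)` built from
the resolvents `J_A` and `J_B`. -/
noncomputable def drT {X : Type*} [NormedAddCommGroup X] [NormedSpace ℝ X]
    (JA JB : X → X) : X → X :=
  fun x => x - JA x + JB ((2 : ℝ) • JA x - x)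

section Aux
variable {X : Type*} [NormedAddCommGroup X] [InnerProductSpace ℝ X]

/-- A strongly monotone Lipschitz map is surjective. -/
lemma surj_strong_mono [FiniteDimensional ℝ X] (F : X → X) {m L : ℝ} (hm : 0 < m)
    (hmL : m ≤ L)
    (hsm : ∀ x y, m * ‖x - y‖ ^ 2 ≤ (inner ℝ (x - y) (F x - F y) : ℝ))
    (hL : ∀ x y, ‖F x - F y‖ ≤ L * ‖x - y‖) (w : X) : ∃ x, F x = w := by
  haveI : CompleteSpace X := FiniteDimensional.complete ℝ X
  have hL0 : 0 < L := lt_of_lt_of_le hm hmL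
  set γ : ℝ := m / L ^ 2 with hγ
  have hγ0 : 0 < γ := div_pos hm (by positivity)
  set k : ℝ := Real.sqrt (1 - m ^ 2 / L ^ 2) with hk
  have hk0 : 0 ≤ k := Real.sqrt_nonneg _
  have hml2 : m ^ 2 / L ^ 2 ≤ 1 := by
    rw [div_le_one (by positivity)]
    have := mul_le_mul hmL hmL (le_of_lt hm) (le_of_lt hL0)
    nlinarith
  have hksq : k ^ 2 = 1 - m ^ 2 / L ^ 2 := Real.sq_sqrt (by linarith)
  have hk1 : k < 1 := by
    nlinarith [Real.sq_sqrt (show (0:ℝ) ≤ 1 - m ^ 2 / L ^ 2 by linarith),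
      div_pos (pow_pos hm 2) (pow_pos hL0 2)]
  set Φ : X → X := fun x => x - γ • (F x - w) with hΦ
  have hcontr : ∀ x y, ‖Φ x - Φ y‖ ≤ k * ‖x - y‖ := by
    intro x y
    have hsq : ‖Φ x - Φ y‖ ^ 2 ≤ (k * ‖x - y‖) ^ 2 := by
      have e : Φ x - Φ y = (x - y) - γ • (F x - F y) := by
        simp only [hΦ]; module
      rw [e]
      have hexp : ‖(x - y) - γ • (F x - F y)‖ ^ 2
          = ‖x - y‖ ^ 2 - 2 * (γ * (inner ℝ (x - y) (F x - F y) : ℝ))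
            + γ ^ 2 * ‖F x - F y‖ ^ 2 := by
        rw [norm_sub_sq_real, real_inner_smul_right, norm_smul]
        rw [Real.norm_eq_abs, abs_of_pos hγ0, mul_pow]
      rw [hexp]
      have h1 : m * ‖x - y‖ ^ 2 ≤ (inner ℝ (x - y) (F x - F y) : ℝ) := hsm x y
      have h2 : ‖F x - F y‖ ^ 2 ≤ (L * ‖x - y‖) ^ 2 := by
        have := hL x y
        nlinarith [norm_nonneg (F x - F y), norm_nonneg (x - y)]
      have hγpos := le_of_lt hγ0
      have : ‖x - y‖ ^ 2 - 2 * (γ * (inner ℝ (x - y) (F x - F y) : ℝ))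
          + γ ^ 2 * ‖F x - F y‖ ^ 2
          ≤ (1 - 2 * γ * m + γ ^ 2 * L ^ 2) * ‖x - y‖ ^ 2 := by
        nlinarith [sq_nonneg γ]
      have heq : 1 - 2 * γ * m + γ ^ 2 * L ^ 2 = k ^ 2 := by
        rw [hksq, hγ]; field_simp; ring
      calc ‖x - y‖ ^ 2 - 2 * (γ * (inner ℝ (x - y) (F x - F y) : ℝ))
            + γ ^ 2 * ‖F x - F y‖ ^ 2 ≤ (1 - 2 * γ * m + γ ^ 2 * L ^ 2) * ‖x - y‖ ^ 2 := this
        _ = (k * ‖x - y‖) ^ 2 := by rw [heq]; ring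
    have h0 : 0 ≤ k * ‖x - y‖ := mul_nonneg hk0 (norm_nonneg _)
    nlinarith [norm_nonneg (Φ x - Φ y)]
  have hlip : LipschitzWith ⟨k, hk0⟩ Φ :=
    LipschitzWith.of_dist_le_mul (fun x y => by
      rw [dist_eq_norm, dist_eq_norm]; exact hcontr x y)
  have hcw : ContractingWith ⟨k, hk0⟩ Φ := ⟨by exact_mod_cast hk1, hlip⟩
  have hfix := hcw.fixedPoint_isFixedPt
  refine ⟨ContractingWith.fixedPoint Φ hcw, ?_⟩
  have : ContractingWith.fixedPoint Φ hcw - γ • (F (ContractingWith.fixedPoint Φ hcw) - w)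
      = ContractingWith.fixedPoint Φ hcw := hfix
  have h0 : γ • (F (ContractingWith.fixedPoint Φ hcw) - w) = 0 := by
    have := sub_eq_iff_eq_add.mp this
    linear_combination (norm := abel) -this
  rcases smul_eq_zero.mp h0 with h | h
  · exact absurd h (ne_of_gt hγ0)
  · exact sub_eq_zero.mp h

end Aux

section DR
variable {X : Type*} [NormedAddCommGroup X] [InnerProductSpace ℝ X]
variable {A B : X → Set X} {JA JB : X → X}

/-- Decomposition of the DR operator value. -/
lemma drT_decomp (hJA : IsResolventOf JA A) (hJB : IsResolventOf JB B) (x : X) :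
    ∃ a u b v : X, u ∈ A a ∧ v ∈ B b ∧ drT JA JB x = u + b ∧ x = a + u ∧
      a = u + v + b := by
  refine ⟨JA x, x - JA x, JB ((2:ℝ) • JA x - x), ((2:ℝ) • JA x - x) - JB ((2:ℝ) • JA x - x),
    hJA x, hJB _, ?_, ?_, ?_⟩
  · simp only [drT]
  · abel
  · rw [two_smul]; abel

/-- Firm nonexpansiveness inequality for `drT`. -/
lemma drT_fne (hmA : IsMonotoneOp A) (hmB : IsMonotoneOp B)
    (hJA : IsResolventOf JA A) (hJB : IsResolventOf JB B) (x y : X) :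
    0 ≤ (inner ℝ (drT JA JB x - drT JA JB y)
      ((x - y) - (drT JA JB x - drT JA JB y)) : ℝ) := by
  obtain ⟨a, u, b, v, hu, hv, hT, hx, ha⟩ := drT_decomp hJA hJB x
  obtain ⟨a', u', b', v', hu', hv', hT', hx', ha'⟩ := drT_decomp hJA hJB y
  have h1 : 0 ≤ (inner ℝ (a - a') (u - u') : ℝ) := hmA hu hu'
  have h2 : 0 ≤ (inner ℝ (b - b') (v - v') : ℝ) := hmB hv hv'
  have e1 : drT JA JB x - drT JA JB y = (u - u') + (b - b') := by
    rw [hT, hT']; abel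
  have e2 : (x - y) - ((u - u') + (b - b')) = (u - u') + (v - v') := by
    rw [hx, hx', ha, ha']; abel
  have e3 : a - a' = (u - u') + (v - v') + (b - b') := by rw [ha, ha']; abel
  rw [e1, e2]
  rw [e3] at h1
  simp only [inner_add_left, inner_add_right] at h1 h2 ⊢
  have c1 := real_inner_comm (u - u') (v - v')
  have c2 := real_inner_comm (u - u') (b - b')
  linarith

/-- The range of the DR operator is contained in the target set. -/
lemma drT_mem_target (hJA : IsResolventOf JA A) (hJB : IsResolventOf JB B) (x : X) :
    drT JA JB x ∈ (svDom A - svRan B) ∩ (svRan A + svDom B) := by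
  obtain ⟨a, u, b, v, hu, hv, hT, hx, ha⟩ := drT_decomp hJA hJB x
  constructor
  · rw [Set.mem_sub]
    exact ⟨a, ⟨u, hu⟩, v, Set.mem_iUnion.mpr ⟨b, hv⟩, by rw [hT, ha]; abel⟩
  · rw [Set.mem_add]
    exact ⟨u, Set.mem_iUnion.mpr ⟨a, hu⟩, b, ⟨v, hv⟩, by rw [hT]⟩

end DR
section StepB
variable {X : Type*} [NormedAddCommGroup X] [InnerProductSpace ℝ X]
variable {A B : X → Set X} {JA JB : X → X}

lemma drT_mono (hmA : IsMonotoneOp A) (hmB : IsMonotoneOp B)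
    (hJA : IsResolventOf JA A) (hJB : IsResolventOf JB B) (x y : X) :
    ‖drT JA JB x - drT JA JB y‖ ^ 2
      ≤ (inner ℝ (x - y) (drT JA JB x - drT JA JB y) : ℝ) := by
  have h := drT_fne hmA hmB hJA hJB x y
  rw [inner_sub_right] at h
  have h2 := real_inner_self_eq_norm_sq (drT JA JB x - drT JA JB y)
  have c := real_inner_comm (drT JA JB x - drT JA JB y) (x - y)
  linarith

lemma drT_nonexp (hmA : IsMonotoneOp A) (hmB : IsMonotoneOp B)
    (hJA : IsResolventOf JA A) (hJB : IsResolventOf JB B) (x y : X) :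
    ‖drT JA JB x - drT JA JB y‖ ≤ ‖x - y‖ := by
  have h := drT_mono hmA hmB hJA hJB x y
  have hcs := real_inner_le_norm (x - y) (drT JA JB x - drT JA JB y)
  nlinarith [norm_nonneg (drT JA JB x - drT JA JB y), norm_nonneg (x - y)]

lemma drT_solve [FiniteDimensional ℝ X] (hmA : IsMonotoneOp A) (hmB : IsMonotoneOp B)
    (hJA : IsResolventOf JA A) (hJB : IsResolventOf JB B)
    {μ ν : ℝ} (hμ : 0 < μ) (hν : 0 ≤ ν) (w : X) :
    ∃ t : X, μ • t + ν • drT JA JB t = w := by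
  have hmL : μ ≤ μ + ν := le_add_of_nonneg_right hν
  apply surj_strong_mono (fun t => μ • t + ν • drT JA JB t) hμ hmL
  · intro x y
    have e : (μ • x + ν • drT JA JB x) - (μ • y + ν • drT JA JB y)
        = μ • (x - y) + ν • (drT JA JB x - drT JA JB y) := by module
    rw [e, inner_add_right, real_inner_smul_right, real_inner_smul_right,
      real_inner_self_eq_norm_sq]
    have h := drT_mono hmA hmB hJA hJB x y
    have h2 : 0 ≤ (inner ℝ (x - y) (drT JA JB x - drT JA JB y) : ℝ) :=
      le_trans (sq_nonneg _) h
    nlinarith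
  · intro x y
    have e : (μ • x + ν • drT JA JB x) - (μ • y + ν • drT JA JB y)
        = μ • (x - y) + ν • (drT JA JB x - drT JA JB y) := by module
    rw [e]
    calc ‖μ • (x - y) + ν • (drT JA JB x - drT JA JB y)‖
        ≤ ‖μ • (x - y)‖ + ‖ν • (drT JA JB x - drT JA JB y)‖ := norm_add_le _ _
      _ ≤ μ * ‖x - y‖ + ν * ‖x - y‖ := by
          rw [norm_smul, norm_smul, Real.norm_eq_abs, Real.norm_eq_abs,
            abs_of_pos hμ, abs_of_nonneg hν]
          have := drT_nonexp hmA hmB hJA hJB x y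
          nlinarith
      _ = (μ + ν) * ‖x - y‖ := by ring

set_option maxHeartbeats 1000000 in
lemma target_subset_closure [FiniteDimensional ℝ X]
    (hmA : IsMonotoneOp A) (hmB : IsMonotoneOp B)
    (hA3 : Is3StarMonotoneOp A) (hB3 : Is3StarMonotoneOp B)
    (hJA : IsResolventOf JA A) (hJB : IsResolventOf JB B) :
    (svDom A - svRan B) ∩ (svRan A + svDom B) ⊆ closure (Set.range (drT JA JB)) := by
  rintro w ⟨h1, h2⟩
  rw [Set.mem_sub] at h1
  obtain ⟨p, hp, q, hq, hpq⟩ := h1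
  rw [Set.mem_add] at h2
  obtain ⟨r, hr, s, hs, hrs⟩ := h2
  obtain ⟨k₁, hk₁⟩ := hA3 p hp r hr
  have hk₁' : ∀ z u', u' ∈ A z → k₁ ≤ (inner ℝ (p - z) (r - u') : ℝ) := fun z u' hu' =>
    hk₁ ⟨z, u', hu', rfl⟩
  obtain ⟨k₂, hk₂⟩ := hB3 s hs q hq
  have hk₂' : ∀ z v', v' ∈ B z → k₂ ≤ (inner ℝ (s - z) (q - v') : ℝ) := fun z v' hv' =>
    hk₂ ⟨z, v', hv', rfl⟩
  rw [Metric.mem_closure_iff]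
  intro η hη
  set c : X := w + r + q with hc
  set K : ℝ := |k₁ + k₂| with hK
  have hK0 : 0 ≤ K := abs_nonneg _
  set ε : ℝ := min 1 (η ^ 2 / (‖c‖ ^ 2 + 2 * K + 1)) with hε
  have hεpos : 0 < ε := lt_min one_pos (div_pos (by positivity) (by positivity))
  have hε1 : ε ≤ 1 := min_le_left _ _
  have hεle : ε ≤ η ^ 2 / (‖c‖ ^ 2 + 2 * K + 1) := min_le_right _ _
  have hKk : -(k₁ + k₂) ≤ K := neg_le_abs _
  clear_value ε K
  obtain ⟨x, hx⟩ := drT_solve hmA hmB hJA hJB hεpos zero_le_one w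
  rw [one_smul] at hx
  obtain ⟨a, u, b, v, hu, hv, hT, hxx, ha⟩ := drT_decomp hJA hJB x
  set δ : X := ε • x with hδ
  have hδw : δ = w - (u + b) := by rw [hδ, ← hT, ← hx]; abel
  have hI1 := hk₁' a u hu
  have hI2 := hk₂' b v hv
  have hpa : p - a = δ + (q - v) := by
    have hpw : p = w + q := by rw [← hpq]; abel
    rw [hpw, hδw, ha]; abel
  have hsb : s - b = δ + (u - r) := by
    have hsw : s = w - r := by rw [← hrs]; abel
    rw [hsw, hδw]; abel
  rw [hpa] at hI1
  rw [hsb] at hI2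
  have e1 : (inner ℝ (δ + (q - v)) (r - u) : ℝ)
      = inner ℝ δ (r - u) + inner ℝ (q - v) (r - u) := inner_add_left _ _ _
  have e2 : (inner ℝ (δ + (u - r)) (q - v) : ℝ)
      = inner ℝ δ (q - v) + inner ℝ (u - r) (q - v) := inner_add_left _ _ _
  have e3 : (inner ℝ (u - r) (q - v) : ℝ) = -(inner ℝ (q - v) (r - u) : ℝ) := by
    rw [real_inner_comm, show u - r = -(r - u) from by abel, inner_neg_right]
  have hkey : k₁ + k₂ ≤ (inner ℝ δ (r - u) : ℝ) + (inner ℝ δ (q - v) : ℝ) := by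
    rw [e1] at hI1; rw [e2, e3] at hI2; linarith
  -- inner ℝ products with x
  have hxw : x = w + (u + v) - δ := by rw [hδw, hxx, ha]; abel
  have hix : (inner ℝ δ x : ℝ)
      = inner ℝ δ w + (inner ℝ δ (u + v) : ℝ) - (inner ℝ δ δ : ℝ) := by
    rw [hxw, inner_sub_right, inner_add_right]
  have huv : (inner ℝ δ (u + v) : ℝ)
      = inner ℝ δ (r + q) - ((inner ℝ δ (r - u) : ℝ) + (inner ℝ δ (q - v) : ℝ)) := by
    rw [show (u + v : X) = (r + q) - ((r - u) + (q - v)) from by abel]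
    simp [inner_sub_right, inner_add_right]
  have hic : (inner ℝ δ w : ℝ) + (inner ℝ δ (r + q) : ℝ) = inner ℝ δ c := by
    rw [hc, show w + r + q = w + (r + q) from by abel]
    simp [inner_add_right]
  have hdd : (inner ℝ δ δ : ℝ) = ‖δ‖ ^ 2 := real_inner_self_eq_norm_sq δ
  have hcs : (inner ℝ δ c : ℝ) ≤ ‖δ‖ * ‖c‖ := real_inner_le_norm δ c
  have hup : (inner ℝ δ x : ℝ) ≤ ‖δ‖ * ‖c‖ + K - ‖δ‖ ^ 2 := by
    rw [hix, huv]; linarith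
  have hsq : ‖δ‖ ^ 2 = ε * (inner ℝ δ x : ℝ) := by
    rw [← hdd, hδ, real_inner_smul_right]
  have hδ2 : ‖δ‖ ^ 2 ≤ ε * (‖δ‖ * ‖c‖) + ε * K := by
    rw [hsq]
    have h1 : (inner ℝ δ x : ℝ) ≤ ‖δ‖ * ‖c‖ + K := by nlinarith [sq_nonneg ‖δ‖]
    have h2 := mul_le_mul_of_nonneg_left h1 (le_of_lt hεpos)
    linarith
  have hδ3 : ‖δ‖ ^ 2 ≤ ε ^ 2 * ‖c‖ ^ 2 + 2 * ε * K := by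
    nlinarith [sq_nonneg (‖δ‖ - ε * ‖c‖), hδ2, hK0, hεpos.le]
  have hδ4 : ‖δ‖ ^ 2 < η ^ 2 := by
    have hd : (0:ℝ) < ‖c‖ ^ 2 + 2 * K + 1 := by positivity
    have : ε * (‖c‖ ^ 2 + 2 * K + 1) ≤ η ^ 2 := by
      rw [← div_mul_cancel₀ (η ^ 2) (ne_of_gt hd)]
      exact mul_le_mul_of_nonneg_right hεle (le_of_lt hd)
    have hε2 : ε ^ 2 * ‖c‖ ^ 2 ≤ ε * ‖c‖ ^ 2 := by
      nlinarith [mul_nonneg (mul_nonneg hεpos.le (sub_nonneg.mpr hε1)) (sq_nonneg ‖c‖)]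
    nlinarith
  refine ⟨drT JA JB x, Set.mem_range_self x, ?_⟩
  have hwd : w - drT JA JB x = δ := by rw [hT, hδw]
  rw [dist_eq_norm, hwd]
  exact lt_of_pow_lt_pow_left₀ 2 (le_of_lt hη) hδ4

end StepB
section Intrinsic
variable {X : Type*} [NormedAddCommGroup X] [NormedSpace ℝ X]

/-- Metric characterization of the intrinsic interior. -/
lemma mem_intrinsicInterior_iff' {s : Set X} {x : X} :
    x ∈ intrinsicInterior ℝ s ↔
      x ∈ s ∧ ∃ ε > 0, ∀ y ∈ affineSpan ℝ s, dist y x < ε → y ∈ s := by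
  constructor
  · rintro ⟨x', hx', rfl⟩
    have hxs : (x' : X) ∈ s := Set.mem_preimage.mp (interior_subset hx')
    refine ⟨hxs, ?_⟩
    rw [mem_interior_iff_mem_nhds, Metric.mem_nhds_iff] at hx'
    obtain ⟨ε, hε, hball⟩ := hx'
    refine ⟨ε, hε, fun y hy hdy => ?_⟩
    have hmem : (⟨y, hy⟩ : affineSpan ℝ s) ∈ Metric.ball x' ε := by
      rw [Metric.mem_ball, Subtype.dist_eq]; exact hdy
    exact hball hmem
  · rintro ⟨hxs, ε, hε, h⟩
    have hxa : x ∈ affineSpan ℝ s := subset_affineSpan ℝ s hxs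
    refine ⟨⟨x, hxa⟩, ?_, rfl⟩
    rw [mem_interior_iff_mem_nhds, Metric.mem_nhds_iff]
    refine ⟨ε, hε, fun y hy => ?_⟩
    exact h y y.2 (by rwa [Metric.mem_ball, Subtype.dist_eq] at hy)

/-- The intrinsic interior is relatively open. -/
lemma intrinsicInterior_relOpen {s : Set X} {x : X} (hx : x ∈ intrinsicInterior ℝ s) :
    ∃ ε > 0, ∀ y ∈ affineSpan ℝ s, dist y x < ε → y ∈ intrinsicInterior ℝ s := by
  obtain ⟨hxs, ε, hε, h⟩ := mem_intrinsicInterior_iff'.mp hx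
  refine ⟨ε / 2, by linarith, fun y hy hdy => ?_⟩
  refine mem_intrinsicInterior_iff'.mpr ⟨h y hy (by linarith), ε / 2, by linarith,
    fun z hz hdz => h z hz ?_⟩
  calc dist z x ≤ dist z y + dist y x := dist_triangle _ _ _
    _ < ε / 2 + ε / 2 := by linarith
    _ = ε := by ring

variable [FiniteDimensional ℝ X]

lemma closure_subset_affineSpan' {s : Set X} :
    closure s ⊆ (affineSpan ℝ s : Set X) :=
  closure_minimal (subset_affineSpan ℝ s) (affineSpan ℝ s).closed_of_finiteDimensional

/-- Segment principle: a convex combination (with positive weight on the interior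
point) of an intrinsic interior point and a closure point is intrinsic interior. -/
lemma segment_mem_intrinsicInterior {E : Set X} (hE : Convex ℝ E) {x₀ x' : X}
    (hx₀ : x₀ ∈ intrinsicInterior ℝ E) (hx' : x' ∈ closure E) {t : ℝ}
    (ht0 : 0 < t) (ht1 : t ≤ 1) :
    t • x₀ + (1 - t) • x' ∈ intrinsicInterior ℝ E := by
  obtain ⟨hx₀E, ε₀, hε₀, h₀⟩ := mem_intrinsicInterior_iff'.mp hx₀
  have ht' : t ≠ 0 := ne_of_gt ht0
  have hx₀a : x₀ ∈ affineSpan ℝ E := subset_affineSpan ℝ E hx₀E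
  have hx'a : x' ∈ affineSpan ℝ E := closure_subset_affineSpan' hx'
  set w : X := t • x₀ + (1 - t) • x' with hw
  have hwa : w ∈ affineSpan ℝ E := by
    have he : w = t • (x₀ -ᵥ x') +ᵥ x' := by
      rw [hw, vadd_eq_add, vsub_eq_sub]; module
    rw [he]
    exact AffineSubspace.smul_vsub_vadd_mem _ t hx₀a hx'a hx'a
  set η : ℝ := t * ε₀ / (2 * (2 - t)) with hη
  have h2t : (0:ℝ) < 2 - t := by linarith
  have hηpos : 0 < η := by positivity
  obtain ⟨x'', hx''E, hx''d⟩ := Metric.mem_closure_iff.mp hx' η hηpos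
  have hx''a : x'' ∈ affineSpan ℝ E := subset_affineSpan ℝ E hx''E
  have hclaim : ∀ z ∈ affineSpan ℝ E, dist z w < t * ε₀ / 2 → z ∈ E := by
    intro z hz hdz
    set y'' : X := t⁻¹ • (z - (1 - t) • x'') with hy''
    have hty : t • y'' = z - (1 - t) • x'' := by
      rw [hy'', smul_smul, mul_inv_cancel₀ ht', one_smul]
    have hy''a : y'' ∈ affineSpan ℝ E := by
      have he : y'' = t⁻¹ • (z -ᵥ x'') +ᵥ x'' := by
        rw [hy'', vadd_eq_add, vsub_eq_sub]
        match_scalars <;> field_simp <;> ring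
      rw [he]
      exact AffineSubspace.smul_vsub_vadd_mem _ _ hz hx''a hx''a
    have hkey : t • (y'' - x₀) = (z - w) + (1 - t) • (x' - x'') := by
      rw [smul_sub, hty, hw]; module
    have hnorm : t * ‖y'' - x₀‖ < t * ε₀ := by
      have h1 : ‖t • (y'' - x₀)‖ = t * ‖y'' - x₀‖ := by
        rw [norm_smul, Real.norm_eq_abs, abs_of_pos ht0]
      have h2 : ‖(z - w) + (1 - t) • (x' - x'')‖
          ≤ ‖z - w‖ + (1 - t) * ‖x' - x''‖ := by
        calc ‖(z - w) + (1 - t) • (x' - x'')‖ ≤ ‖z - w‖ + ‖(1 - t) • (x' - x'')‖ :=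
              norm_add_le _ _
          _ = ‖z - w‖ + (1 - t) * ‖x' - x''‖ := by
              rw [norm_smul, Real.norm_eq_abs, abs_of_nonneg (by linarith : (0:ℝ) ≤ 1 - t)]
      have h3 : ‖z - w‖ < t * ε₀ / 2 := by rw [← dist_eq_norm]; exact hdz
      have h4 : ‖x' - x''‖ < η := by rw [← dist_eq_norm]; exact hx''d
      have h5 : (1 - t) * ‖x' - x''‖ ≤ t * ε₀ / 2 := by
        have h6 : (1 - t) * ‖x' - x''‖ ≤ (2 - t) * η := by
          have := norm_nonneg (x' - x'')
          nlinarith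
        have h7 : (2 - t) * η = t * ε₀ / 2 := by
          rw [hη]; field_simp
        linarith
      calc t * ‖y'' - x₀‖ = ‖t • (y'' - x₀)‖ := h1.symm
        _ = ‖(z - w) + (1 - t) • (x' - x'')‖ := by rw [hkey]
        _ ≤ ‖z - w‖ + (1 - t) * ‖x' - x''‖ := h2
        _ < t * ε₀ / 2 + t * ε₀ / 2 := by linarith
        _ = t * ε₀ := by ring
    have hy''d : dist y'' x₀ < ε₀ := by
      rw [dist_eq_norm]
      exact lt_of_mul_lt_mul_left (by linarith) ht0.le
    have hy''E : y'' ∈ E := h₀ y'' hy''a hy''d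
    have hzE : z = t • y'' + (1 - t) • x'' := by rw [hty]; abel
    rw [hzE]
    exact hE hy''E hx''E ht0.le (by linarith) (by ring)
  refine mem_intrinsicInterior_iff'.mpr ⟨?_, t * ε₀ / 2, by positivity, hclaim⟩
  exact hclaim w hwa (by rw [dist_self]; positivity)

/-- The affine span of a set sandwiched between `intrinsicInterior E` and `closure E`
agrees with the affine span of `E`. -/
lemma affineSpan_eq_of_sandwich {E M : Set X} (hE : Convex ℝ E) (hne : E.Nonempty)
    (h1 : intrinsicInterior ℝ E ⊆ M) (h2 : M ⊆ closure E) :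
    affineSpan ℝ M = affineSpan ℝ E := by
  obtain ⟨x₀, hx₀⟩ := hne.intrinsicInterior hE
  obtain ⟨ε, hε, hball⟩ := intrinsicInterior_relOpen hx₀
  refine le_antisymm ?_ ?_
  · rw [affineSpan_le]
    exact fun x hx => closure_subset_affineSpan' (h2 hx)
  · rw [affineSpan_le]
    intro p hp
    have hpa : p ∈ affineSpan ℝ E := subset_affineSpan ℝ E hp
    have hx₀a : x₀ ∈ affineSpan ℝ E :=
      subset_affineSpan ℝ E (intrinsicInterior_subset hx₀)
    have hx₀M : x₀ ∈ affineSpan ℝ M := mem_affineSpan ℝ (h1 hx₀)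
    by_cases hpx : p = x₀
    · rw [hpx]; exact hx₀M
    have hd : 0 < dist p x₀ := dist_pos.mpr hpx
    set θ : ℝ := min 1 (ε / (2 * dist p x₀)) with hθ
    have hθpos : 0 < θ := lt_min one_pos (by positivity)
    have hθ' : θ ≠ 0 := ne_of_gt hθpos
    set p' : X := x₀ + θ • (p - x₀) with hp'
    have hp'a : p' ∈ affineSpan ℝ E := by
      have he : p' = θ • (p -ᵥ x₀) +ᵥ x₀ := by rw [hp', vadd_eq_add, vsub_eq_sub]; abel
      rw [he]
      exact AffineSubspace.smul_vsub_vadd_mem _ _ hpa hx₀a hx₀a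
    have hp'd : dist p' x₀ < ε := by
      rw [dist_eq_norm, hp', add_sub_cancel_left, norm_smul, Real.norm_eq_abs,
        abs_of_pos hθpos]
      have hθle : θ ≤ ε / (2 * dist p x₀) := min_le_right _ _
      have h8 : θ * dist p x₀ ≤ ε / 2 := by
        have h9 := mul_le_mul_of_nonneg_right hθle (dist_nonneg (x := p) (y := x₀))
        have h10 : ε / (2 * dist p x₀) * dist p x₀ = ε / 2 := by
          field_simp
        linarith
      rw [dist_eq_norm] at h8
      linarith
    have hp'M : p' ∈ affineSpan ℝ M := mem_affineSpan ℝ (h1 (hball p' hp'a hp'd))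
    have he : p = θ⁻¹ • (p' -ᵥ x₀) +ᵥ x₀ := by
      rw [hp', vadd_eq_add, vsub_eq_sub, add_sub_cancel_left, smul_smul,
        inv_mul_cancel₀ hθ', one_smul]
      abel
    rw [he]
    exact AffineSubspace.smul_vsub_vadd_mem _ _ hp'M hx₀M hx₀M

/-- Sandwich lemma for intrinsic interiors. -/
lemma intrinsicInterior_eq_of_sandwich {E M : Set X} (hE : Convex ℝ E) (hne : E.Nonempty)
    (h1 : intrinsicInterior ℝ E ⊆ M) (h2 : M ⊆ closure E) :
    intrinsicInterior ℝ M = intrinsicInterior ℝ E := by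
  have hspan := affineSpan_eq_of_sandwich hE hne h1 h2
  obtain ⟨x₀, hx₀⟩ := hne.intrinsicInterior hE
  apply Set.eq_of_subset_of_subset
  · intro x hx
    obtain ⟨hxM, ε, hε, hballM⟩ := mem_intrinsicInterior_iff'.mp hx
    rw [hspan] at hballM
    by_cases hxx : x = x₀
    · rw [hxx]; exact hx₀
    have hd : 0 < dist x x₀ := dist_pos.mpr hxx
    have hxa : x ∈ affineSpan ℝ E := by
      rw [← hspan]; exact subset_affineSpan ℝ M hxM
    have hx₀a : x₀ ∈ affineSpan ℝ E :=
      subset_affineSpan ℝ E (intrinsicInterior_subset hx₀)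
    set θ : ℝ := min 1 (ε / (2 * dist x x₀)) with hθ
    have hθpos : 0 < θ := lt_min one_pos (by positivity)
    set x' : X := x + θ • (x - x₀) with hx'
    have hx'a : x' ∈ affineSpan ℝ E := by
      have he : x' = θ • (x -ᵥ x₀) +ᵥ x := by rw [hx', vadd_eq_add, vsub_eq_sub]; abel
      rw [he]
      exact AffineSubspace.smul_vsub_vadd_mem _ _ hxa hx₀a hxa
    have hx'd : dist x' x < ε := by
      rw [dist_eq_norm, hx', add_sub_cancel_left, norm_smul, Real.norm_eq_abs,
        abs_of_pos hθpos]
      have hθle : θ ≤ ε / (2 * dist x x₀) := min_le_right _ _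
      rw [le_div_iff₀ (by positivity)] at hθle
      rw [dist_eq_norm] at hθle
      nlinarith [norm_nonneg (x - x₀)]
    have hx'cl : x' ∈ closure E := h2 (hballM x' hx'a hx'd)
    set t : ℝ := θ / (1 + θ) with ht
    have ht0 : 0 < t := by positivity
    have ht1 : t ≤ 1 := by
      rw [ht, div_le_one (by positivity)]; linarith
    have hxe : x = t • x₀ + (1 - t) • x' := by
      rw [hx', ht]
      have h1θ : (1:ℝ) + θ ≠ 0 := by positivity
      match_scalars <;> field_simp <;> ring
    rw [hxe]
    exact segment_mem_intrinsicInterior hE hx₀ hx'cl ht0 ht1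
  · intro x hx
    obtain ⟨ε, hε, hball⟩ := intrinsicInterior_relOpen hx
    refine mem_intrinsicInterior_iff'.mpr ⟨h1 hx, ε, hε, fun y hy hdy => ?_⟩
    rw [hspan] at hy
    exact h1 (hball y hy hdy)

end Intrinsic
section Hull
variable {X : Type*} [NormedAddCommGroup X] [InnerProductSpace ℝ X]
variable {A B : X → Set X} {JA JB : X → X}

/-- Every point of the convex hull of the range satisfies a uniform graph bound. -/
lemma hull_bound (hmA : IsMonotoneOp A) (hmB : IsMonotoneOp B)
    (hJA : IsResolventOf JA A) (hJB : IsResolventOf JB B) {pt : X}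
    (hpt : pt ∈ convexHull ℝ (Set.range (drT JA JB))) :
    ∃ C : ℝ, 0 ≤ C ∧ ∀ t : X,
      (inner ℝ (pt - drT JA JB t) (t - drT JA JB t) : ℝ) ≤ C * (1 + ‖drT JA JB t‖) := by
  suffices main : convexHull ℝ (Set.range (drT JA JB)) ⊆ {pt : X | ∃ C : ℝ, 0 ≤ C ∧ ∀ t : X,
      (inner ℝ (pt - drT JA JB t) (t - drT JA JB t) : ℝ) ≤ C * (1 + ‖drT JA JB t‖)} by
    exact main hpt
  refine convexHull_min ?_ ?_
  · rintro pt ⟨s₀, rfl⟩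
    refine ⟨‖s₀ - drT JA JB s₀‖ * (1 + ‖drT JA JB s₀‖), by positivity, fun t => ?_⟩
    have h := drT_fne hmA hmB hJA hJB s₀ t
    have key : (inner ℝ (drT JA JB s₀ - drT JA JB t) (t - drT JA JB t) : ℝ)
        ≤ inner ℝ (drT JA JB s₀ - drT JA JB t) (s₀ - drT JA JB s₀) := by
      have e3 : (t - drT JA JB t) - (s₀ - drT JA JB s₀)
          = -((s₀ - t) - (drT JA JB s₀ - drT JA JB t)) := by abel
      have e2 : (inner ℝ (drT JA JB s₀ - drT JA JB t)
          ((t - drT JA JB t) - (s₀ - drT JA JB s₀)) : ℝ) ≤ 0 := by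
        rw [e3, inner_neg_right]; linarith
      rw [inner_sub_right] at e2; linarith
    have hcs : (inner ℝ (drT JA JB s₀ - drT JA JB t) (s₀ - drT JA JB s₀) : ℝ)
        ≤ ‖drT JA JB s₀ - drT JA JB t‖ * ‖s₀ - drT JA JB s₀‖ := real_inner_le_norm _ _
    have hDn : ‖drT JA JB s₀ - drT JA JB t‖ ≤ ‖drT JA JB s₀‖ + ‖drT JA JB t‖ :=
      norm_sub_le _ _
    have h0 := norm_nonneg (s₀ - drT JA JB s₀)
    have h1 := norm_nonneg (drT JA JB s₀)
    have h2 := norm_nonneg (drT JA JB t)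
    have h3 := norm_nonneg (drT JA JB s₀ - drT JA JB t)
    nlinarith [mul_le_mul_of_nonneg_right hDn h0, mul_nonneg (mul_nonneg h0 h1) h2]
  · intro pt₁ h₁ pt₂ h₂ a b ha hb hab
    obtain ⟨C₁, hC₁0, hC₁⟩ := h₁
    obtain ⟨C₂, hC₂0, hC₂⟩ := h₂
    refine ⟨a * C₁ + b * C₂, by positivity, fun t => ?_⟩
    have e : a • pt₁ + b • pt₂ - drT JA JB t
        = a • (pt₁ - drT JA JB t) + b • (pt₂ - drT JA JB t) := by
      have h' : (a + b) • drT JA JB t = drT JA JB t := by rw [hab, one_smul]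
      rw [smul_sub, smul_sub]
      nth_rewrite 1 [← h']
      rw [add_smul]; abel
    rw [e, inner_add_left, real_inner_smul_left, real_inner_smul_left]
    have k1 := mul_le_mul_of_nonneg_left (hC₁ t) ha
    have k2 := mul_le_mul_of_nonneg_left (hC₂ t) hb
    nlinarith

/-- Quantitative approximation of hull points by range points. -/
lemma hull_approx [FiniteDimensional ℝ X] (hmA : IsMonotoneOp A) (hmB : IsMonotoneOp B)
    (hJA : IsResolventOf JA A) (hJB : IsResolventOf JB B) {x : X} {C : ℝ} (hC0 : 0 ≤ C)
    (hCb : ∀ t : X, (inner ℝ (x - drT JA JB t) (t - drT JA JB t) : ℝ)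
      ≤ C * (1 + ‖drT JA JB t‖))
    {lam : ℝ} (h0 : 0 < lam) (h1 : lam ≤ 1) :
    ∃ t : X, x - drT JA JB t = lam • (t - drT JA JB t) ∧
      ‖x - drT JA JB t‖ ^ 2 ≤ 2 * lam * (C * (1 + ‖x‖)) + lam ^ 2 * C ^ 2 := by
  obtain ⟨t, ht⟩ := drT_solve hmA hmB hJA hJB h0 (by linarith : (0:ℝ) ≤ 1 - lam) x
  have he : x - drT JA JB t = lam • (t - drT JA JB t) := by
    rw [← ht]; module
  refine ⟨t, he, ?_⟩
  have h3 : (inner ℝ (x - drT JA JB t) (t - drT JA JB t) : ℝ)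
      = lam * ‖t - drT JA JB t‖ ^ 2 := by
    rw [he, real_inner_smul_left, real_inner_self_eq_norm_sq]
  have h4 : ‖x - drT JA JB t‖ ^ 2 = lam ^ 2 * ‖t - drT JA JB t‖ ^ 2 := by
    rw [he, norm_smul, Real.norm_eq_abs, abs_of_pos h0, mul_pow]
  have h5 : ‖drT JA JB t‖ ≤ ‖x‖ + ‖x - drT JA JB t‖ := by
    have h5' := norm_sub_le x (x - drT JA JB t)
    have e5 : x - (x - drT JA JB t) = drT JA JB t := by abel
    rwa [e5] at h5'
  have h6 : lam * ‖t - drT JA JB t‖ ^ 2 ≤ C * (1 + ‖x‖ + ‖x - drT JA JB t‖) := by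
    have := hCb t
    nlinarith
  have h7 : ‖x - drT JA JB t‖ ^ 2 ≤ lam * (C * (1 + ‖x‖ + ‖x - drT JA JB t‖)) := by
    rw [h4]
    calc lam ^ 2 * ‖t - drT JA JB t‖ ^ 2 = lam * (lam * ‖t - drT JA JB t‖ ^ 2) := by ring
      _ ≤ lam * (C * (1 + ‖x‖ + ‖x - drT JA JB t‖)) :=
          mul_le_mul_of_nonneg_left h6 h0.le
  nlinarith [sq_nonneg (‖x - drT JA JB t‖ - lam * C), norm_nonneg (x - drT JA JB t)]

/-- The convex hull of the range is contained in the closure of the range. -/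
lemma hull_subset_closure [FiniteDimensional ℝ X] (hmA : IsMonotoneOp A)
    (hmB : IsMonotoneOp B) (hJA : IsResolventOf JA A) (hJB : IsResolventOf JB B) :
    convexHull ℝ (Set.range (drT JA JB)) ⊆ closure (Set.range (drT JA JB)) := by
  intro x hx
  obtain ⟨C, hC0, hCb⟩ := hull_bound hmA hmB hJA hJB hx
  rw [Metric.mem_closure_iff]
  intro η hη
  set M : ℝ := 2 * (C * (1 + ‖x‖)) + C ^ 2 with hM
  have hM0 : 0 ≤ M := by positivity
  set lam : ℝ := min 1 (η ^ 2 / (M + 1)) with hlam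
  have hl0 : 0 < lam := lt_min one_pos (div_pos (by positivity) (by positivity))
  have hl1 : lam ≤ 1 := min_le_left _ _
  have hlle : lam ≤ η ^ 2 / (M + 1) := min_le_right _ _
  obtain ⟨t, _, hest⟩ := hull_approx hmA hmB hJA hJB hC0 hCb hl0 hl1
  refine ⟨drT JA JB t, Set.mem_range_self t, ?_⟩
  rw [dist_eq_norm]
  have hsq : ‖x - drT JA JB t‖ ^ 2 < η ^ 2 := by
    have h2 : lam ^ 2 * C ^ 2 ≤ lam * C ^ 2 := by
      nlinarith [mul_nonneg (mul_nonneg hl0.le (sub_nonneg.mpr hl1)) (sq_nonneg C)]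
    have h3 : lam * (M + 1) ≤ η ^ 2 := by
      rw [← div_mul_cancel₀ (η ^ 2) (show M + 1 ≠ 0 by positivity)]
      exact mul_le_mul_of_nonneg_right hlle (by positivity)
    nlinarith
  exact lt_of_pow_lt_pow_left₀ 2 hη.le hsq

end Hull

section RI
variable {X : Type*} [NormedAddCommGroup X] [InnerProductSpace ℝ X] [FiniteDimensional ℝ X]
variable {A B : X → Set X} {JA JB : X → X}

set_option maxHeartbeats 1000000 in
lemma ri_hull_subset_range (hmA : IsMonotoneOp A) (hmB : IsMonotoneOp B)
    (hJA : IsResolventOf JA A) (hJB : IsResolventOf JB B) :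
    intrinsicInterior ℝ (convexHull ℝ (Set.range (drT JA JB)))
      ⊆ Set.range (drT JA JB) := by
  intro x hx
  obtain ⟨hxK, ε, hε, hball⟩ := mem_intrinsicInterior_iff'.mp hx
  rw [affineSpan_convexHull] at hball
  set aff := affineSpan ℝ (Set.range (drT JA JB)) with haff
  set V := aff.direction with hV
  have hxa : x ∈ aff := by
    have := subset_affineSpan ℝ _ hxK
    rwa [affineSpan_convexHull] at this
  obtain ⟨C, hC0, hCb⟩ := hull_bound hmA hmB hJA hJB hxK
  -- approximating sequence
  have happrox : ∀ n : ℕ, ∃ t : X,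
      x - drT JA JB t = (1 / ((n:ℝ)+1)) • (t - drT JA JB t) ∧
      ‖x - drT JA JB t‖ ^ 2
        ≤ 2 * (1/((n:ℝ)+1)) * (C * (1 + ‖x‖)) + (1/((n:ℝ)+1))^2 * C^2 := by
    intro n
    have h0 : (0:ℝ) < 1/((n:ℝ)+1) := by positivity
    have h1 : (1/((n:ℝ)+1):ℝ) ≤ 1 := by
      rw [div_le_one (by positivity)]
      linarith [(Nat.cast_nonneg n : (0:ℝ) ≤ n)]
    exact hull_approx hmA hmB hJA hJB hC0 hCb h0 h1
  choose t ht1 ht2 using happrox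
  set z : ℕ → X := fun n => drT JA JB (t n) with hz
  set M : ℝ := 2 * (C * (1 + ‖x‖)) + C ^ 2 with hM
  have hM0 : 0 ≤ M := by positivity
  have hd2 : ∀ n : ℕ, ‖x - z n‖ ^ 2 ≤ M / ((n:ℝ)+1) := by
    intro n
    have h := ht2 n
    have hn0 : (0:ℝ) < (n:ℝ)+1 := by positivity
    have e1 : (1/((n:ℝ)+1):ℝ)^2 ≤ 1/((n:ℝ)+1) := by
      have h1 : (1/((n:ℝ)+1):ℝ) ≤ 1 := by
        rw [div_le_one hn0]; linarith [(Nat.cast_nonneg n : (0:ℝ) ≤ n)]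
      nlinarith [le_of_lt (show (0:ℝ) < 1/((n:ℝ)+1) by positivity)]
    have e2 : M / ((n:ℝ)+1) = (1/((n:ℝ)+1)) * M := by ring
    rw [e2, hM]
    nlinarith [sq_nonneg C, le_of_lt (show (0:ℝ) < 1/((n:ℝ)+1) by positivity),
      mul_nonneg hC0 (by positivity : (0:ℝ) ≤ 1 + ‖x‖)]
  -- z n → x
  have hzx : Filter.Tendsto z Filter.atTop (nhds x) := by
    rw [Metric.tendsto_atTop]
    intro η hη
    obtain ⟨N, hN⟩ := exists_nat_gt (M / η ^ 2)
    refine ⟨N + 1, fun n hn => ?_⟩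
    have hd : ‖x - z n‖ ^ 2 ≤ M / ((n:ℝ)+1) := hd2 n
    have hn1 : (M / η^2 : ℝ) < (n:ℝ) + 1 := by
      have : (N:ℝ) ≤ (n:ℝ) := Nat.cast_le.mpr (le_trans (Nat.le_succ N) hn)
      linarith
    have hlt : M / ((n:ℝ)+1) < η ^ 2 := by
      rw [div_lt_iff₀ (by positivity)]
      rw [div_lt_iff₀ (by positivity)] at hn1
      nlinarith
    have : ‖x - z n‖ ^ 2 < η ^ 2 := lt_of_le_of_lt hd hlt
    have hxz : ‖x - z n‖ < η := lt_of_pow_lt_pow_left₀ 2 hη.le this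
    rw [dist_eq_norm, ← norm_neg]
    have e : -(z n - x) = x - z n := by abel
    rwa [e]
  -- the sequence u n
  set u : ℕ → X := fun n => ((n:ℝ)+1) • (x - z n) with hu
  have hun : ∀ n, u n = t n - z n := by
    intro n
    have h := ht1 n
    have hn0 : ((n:ℝ)+1) ≠ 0 := by positivity
    calc u n = ((n:ℝ)+1) • (x - z n) := rfl
      _ = ((n:ℝ)+1) • ((1/((n:ℝ)+1)) • (t n - z n)) := by rw [← h]
      _ = t n - z n := by rw [smul_smul, mul_one_div, div_self hn0, one_smul]
  have hzaff : ∀ n, z n ∈ aff := fun n => subset_affineSpan ℝ _ (Set.mem_range_self (t n))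
  have hzn : ∀ n, drT JA JB (t n) = z n := fun n => rfl
  -- orthonormal basis of the direction
  set bV := stdOrthonormalBasis ℝ V with hbV
  set dV := Module.finrank ℝ V with hdV
  have hbnorm : ∀ i : Fin dV, ‖(bV i : X)‖ = 1 := by
    intro i
    have := bV.orthonormal.1 i
    rwa [show ‖bV i‖ = ‖(bV i : X)‖ from rfl] at this
  -- the 2*dV perturbed points lie in the hull
  have hbmem : ∀ (i : Fin dV) (σ : ℝ), |σ| = ε/2 →
      x + σ • (bV i : X) ∈ convexHull ℝ (Set.range (drT JA JB)) := by
    intro i σ hσ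
    apply hball
    · have e : x + σ • (bV i : X) = σ • (bV i : X) +ᵥ x := by
        rw [vadd_eq_add]; abel
      rw [e]
      exact AffineSubspace.vadd_mem_of_mem_direction
        (Submodule.smul_mem _ _ (SetLike.coe_mem (bV i))) hxa
    · rw [dist_eq_norm, add_sub_cancel_left, norm_smul, Real.norm_eq_abs, hσ,
        hbnorm i]
      linarith
  have hCp : ∀ i : Fin dV, ∃ Ci : ℝ, 0 ≤ Ci ∧ ∀ t' : X,
      (inner ℝ (x + (ε/2) • (bV i : X) - drT JA JB t') (t' - drT JA JB t') : ℝ)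
        ≤ Ci * (1 + ‖drT JA JB t'‖) := by
    intro i
    exact hull_bound hmA hmB hJA hJB (hbmem i (ε/2) (abs_of_pos (by linarith)))
  have hCm : ∀ i : Fin dV, ∃ Ci : ℝ, 0 ≤ Ci ∧ ∀ t' : X,
      (inner ℝ (x + (-(ε/2)) • (bV i : X) - drT JA JB t') (t' - drT JA JB t') : ℝ)
        ≤ Ci * (1 + ‖drT JA JB t'‖) := by
    intro i
    refine hull_bound hmA hmB hJA hJB (hbmem i (-(ε/2)) ?_)
    rw [abs_neg, abs_of_pos (by linarith)]
  choose Cp hCp0 hCpb using hCp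
  choose Cm hCm0 hCmb using hCm
  -- nonnegativity of ⟪x - z n, u n⟫
  have hxzu : ∀ n, 0 ≤ (inner ℝ (x - z n) (u n) : ℝ) := by
    intro n
    rw [hu]
    simp only [real_inner_smul_right]
    exact mul_nonneg (by positivity) real_inner_self_nonneg
  -- coordinate bounds
  have hcoordp : ∀ (n : ℕ) (i : Fin dV),
      (ε/2) * (inner ℝ ((bV i : X)) (u n) : ℝ) ≤ Cp i * (1 + ‖z n‖) := by
    intro n i
    have h := hCpb i (t n)
    rw [hzn n, ← hun n] at h
    have e : x + (ε/2) • (bV i : X) - z n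
        = (x - z n) + (ε/2) • (bV i : X) := by abel
    rw [e, inner_add_left, real_inner_smul_left] at h
    linarith [hxzu n]
  have hcoordm : ∀ (n : ℕ) (i : Fin dV),
      -((ε/2) * (inner ℝ ((bV i : X)) (u n) : ℝ)) ≤ Cm i * (1 + ‖z n‖) := by
    intro n i
    have h := hCmb i (t n)
    rw [hzn n, ← hun n] at h
    have e : x + (-(ε/2)) • (bV i : X) - z n
        = (x - z n) + (-(ε/2)) • (bV i : X) := by abel
    rw [e, inner_add_left, real_inner_smul_left] at h
    linarith [hxzu n]
  -- orthogonal projection of u onto V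
  set q : ℕ → X := fun n => ((V.orthogonalProjectionOnto (u n)) : X) with hq
  have hqV : ∀ n, q n ∈ V := fun n => SetLike.coe_mem _
  have hinner_eq : ∀ (n : ℕ) (v : X), v ∈ V → (inner ℝ v (u n) : ℝ) = inner ℝ v (q n) := by
    intro n v hv
    have horth : u n - q n ∈ Vᗮ := Submodule.sub_starProjection_mem_orthogonal (K := V) (u n)
    have h0 : (inner ℝ v (u n - q n) : ℝ) = 0 :=
      (Submodule.mem_orthogonal V (u n - q n)).mp horth v hv
    rw [inner_sub_right] at h0
    linarith
  -- eventual bound for z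
  have hNbound : ∃ N₀ : ℕ, ∀ n ≥ N₀, ‖z n‖ ≤ ‖x‖ + 1 := by
    obtain ⟨N₀, hN₀⟩ := exists_nat_gt M
    refine ⟨N₀, fun n hn => ?_⟩
    have hd : ‖x - z n‖ ^ 2 ≤ M / ((n:ℝ)+1) := hd2 n
    have hlt : M / ((n:ℝ)+1) < 1 := by
      rw [div_lt_one (by positivity)]
      have : (N₀:ℝ) ≤ n := Nat.cast_le.mpr hn
      linarith
    have h1 : ‖x - z n‖ ^ 2 < 1 := lt_of_le_of_lt hd hlt
    have h2 : ‖x - z n‖ < 1 := by nlinarith [norm_nonneg (x - z n)]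
    have h3 : ‖z n‖ ≤ ‖x‖ + ‖x - z n‖ := by
      have h4 := norm_sub_le x (x - z n)
      have e : x - (x - z n) = z n := by abel
      rwa [e] at h4
    linarith
  obtain ⟨N₀, hN₀⟩ := hNbound
  set R : ℝ := Real.sqrt (∑ i : Fin dV, ((2/ε) * ((Cp i + Cm i) * (2 + ‖x‖)))^2) with hR
  have hqbound : ∀ n, N₀ ≤ n → ‖q n‖ ≤ R := by
    intro n hn
    have hcoord : ∀ i : Fin dV, |(inner ℝ ((bV i : X)) (q n) : ℝ)|
        ≤ (2/ε) * ((Cp i + Cm i) * (2 + ‖x‖)) := by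
      intro i
      have h1 := hcoordp n i
      have h2 := hcoordm n i
      have he := hinner_eq n ((bV i : X)) (SetLike.coe_mem _)
      rw [he] at h1 h2
      have hz1 : 1 + ‖z n‖ ≤ 2 + ‖x‖ := by have := hN₀ n hn; linarith
      have hε2 : (0:ℝ) < ε/2 := by linarith
      have u1 : (ε/2) * (inner ℝ ((bV i : X)) (q n) : ℝ) ≤ Cp i * (2 + ‖x‖) :=
        le_trans h1 (mul_le_mul_of_nonneg_left hz1 (hCp0 i))
      have u1' : -((ε/2) * (inner ℝ ((bV i : X)) (q n) : ℝ)) ≤ Cm i * (2 + ‖x‖) :=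
        le_trans h2 (mul_le_mul_of_nonneg_left hz1 (hCm0 i))
      rw [abs_le]
      have hfrac : (0:ℝ) ≤ 2/ε := by positivity
      constructor
      · have e : (inner ℝ ((bV i : X)) (q n) : ℝ)
            = (2/ε) * ((ε/2) * (inner ℝ ((bV i : X)) (q n) : ℝ)) := by
          field_simp
        rw [e]
        have u2 : -(Cm i * (2 + ‖x‖)) ≤ (ε/2) * (inner ℝ ((bV i : X)) (q n) : ℝ) := by
          linarith
        have u3 := mul_le_mul_of_nonneg_left u2 hfrac
        have hx2 : (0:ℝ) ≤ 2 + ‖x‖ := by positivity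
        nlinarith [mul_nonneg (mul_nonneg hfrac (hCp0 i)) hx2]
      · have e : (inner ℝ ((bV i : X)) (q n) : ℝ)
            = (2/ε) * ((ε/2) * (inner ℝ ((bV i : X)) (q n) : ℝ)) := by
          field_simp
        rw [e]
        have u3 := mul_le_mul_of_nonneg_left u1 hfrac
        have hx2 : (0:ℝ) ≤ 2 + ‖x‖ := by positivity
        nlinarith [mul_nonneg (mul_nonneg hfrac (hCm0 i)) hx2]
    have hpars : ‖q n‖ ^ 2 = ∑ i : Fin dV, (inner ℝ ((bV i : X)) (q n) : ℝ) ^ 2 := by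
      have h2 := bV.sum_inner_mul_inner (V.orthogonalProjectionOnto (u n))
        (V.orthogonalProjectionOnto (u n))
      have h3 : (inner ℝ (q n) (q n) : ℝ)
          = inner ℝ (V.orthogonalProjectionOnto (u n)) (V.orthogonalProjectionOnto (u n)) :=
        (Submodule.coe_inner V _ _).symm
      rw [← real_inner_self_eq_norm_sq, h3, ← h2]
      refine Finset.sum_congr rfl fun i _ => ?_
      rw [real_inner_comm (V.orthogonalProjectionOnto (u n)) (bV i)]
      simp only [Submodule.coe_inner]
      rw [sq, real_inner_comm ((V.orthogonalProjectionOnto (u n) : X)) ((bV i : X))]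
    have hsum : ‖q n‖ ^ 2 ≤ ∑ i : Fin dV, ((2/ε) * ((Cp i + Cm i) * (2 + ‖x‖)))^2 := by
      rw [hpars]
      refine Finset.sum_le_sum fun i _ => ?_
      have := hcoord i
      calc (inner ℝ ((bV i : X)) (q n) : ℝ) ^ 2
          = |(inner ℝ ((bV i : X)) (q n) : ℝ)| ^ 2 := (sq_abs _).symm
        _ ≤ ((2/ε) * ((Cp i + Cm i) * (2 + ‖x‖)))^2 :=
            pow_le_pow_left₀ (abs_nonneg _) this 2
    calc ‖q n‖ = Real.sqrt (‖q n‖ ^ 2) := (Real.sqrt_sq (norm_nonneg _)).symm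
      _ ≤ R := by rw [hR]; exact Real.sqrt_le_sqrt hsum
  -- compactness
  have hball2 : ∀ m : ℕ, q (m + N₀) ∈ Metric.closedBall (0:X) R := by
    intro m
    rw [Metric.mem_closedBall, dist_zero_right]
    exact hqbound (m + N₀) (Nat.le_add_left N₀ m)
  obtain ⟨w, hwmem, φ, hφ, hconv⟩ :=
    (isCompact_closedBall (0:X) R).tendsto_subseq hball2
  have hz' : Filter.Tendsto (fun m => z (φ m + N₀)) Filter.atTop (nhds x) :=
    hzx.comp ((Filter.tendsto_add_atTop_nat N₀).comp hφ.tendsto_atTop)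
  have hq' : Filter.Tendsto (fun m => q (φ m + N₀)) Filter.atTop (nhds w) := hconv
  -- limit inequality
  have hfinal : ∀ s : X, 0 ≤ (inner ℝ (x - drT JA JB s) (w - (s - drT JA JB s)) : ℝ) := by
    intro s
    have hterm : ∀ m : ℕ, 0 ≤ (inner ℝ (z (φ m + N₀) - drT JA JB s)
        (q (φ m + N₀) - (s - drT JA JB s)) : ℝ) := by
      intro m
      set n := φ m + N₀ with hn
      have hfne := drT_fne hmA hmB hJA hJB (t n) s
      rw [hzn n] at hfne
      have e : (t n - s) - (z n - drT JA JB s) = u n - (s - drT JA JB s) := by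
        rw [hun n]; abel
      rw [e] at hfne
      have hVz : z n - drT JA JB s ∈ V := AffineSubspace.vsub_mem_direction (hzaff n)
        (subset_affineSpan ℝ _ (Set.mem_range_self s))
      have heq2 : (inner ℝ (z n - drT JA JB s) (u n - (s - drT JA JB s)) : ℝ)
          = inner ℝ (z n - drT JA JB s) (q n - (s - drT JA JB s)) := by
        have hie := hinner_eq n (z n - drT JA JB s) hVz
        simp only [inner_sub_right]
        rw [hie]
      rw [heq2] at hfne
      exact hfne
    have hlim : Filter.Tendsto (fun m => (inner ℝ (z (φ m + N₀) - drT JA JB s)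
        (q (φ m + N₀) - (s - drT JA JB s)) : ℝ)) Filter.atTop
        (nhds (inner ℝ (x - drT JA JB s) (w - (s - drT JA JB s)))) :=
      Filter.Tendsto.inner (hz'.sub tendsto_const_nhds) (hq'.sub tendsto_const_nhds)
    exact ge_of_tendsto hlim (Filter.Eventually.of_forall hterm)
  have hkey := hfinal (x + w)
  have e : w - ((x + w) - drT JA JB (x + w)) = -(x - drT JA JB (x + w)) := by abel
  rw [e, inner_neg_right, real_inner_self_eq_norm_sq] at hkey
  have h0 : ‖x - drT JA JB (x + w)‖ ^ 2 = 0 := le_antisymm (by linarith) (sq_nonneg _)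
  have h1 : x - drT JA JB (x + w) = 0 := by
    rw [← norm_eq_zero]
    nlinarith [norm_nonneg (x - drT JA JB (x + w)), h0]
  exact ⟨x + w, (sub_eq_zero.mp h1).symm⟩

end RI

/-- For maximally monotone and 3* monotone `A, B`, the range of the Douglas–Rachford
operator is nearly equal to `(dom A - ran B) ∩ (ran A + dom B)`. -/
theorem ran_drT_nearEq {X : Type*} [NormedAddCommGroup X] [InnerProductSpace ℝ X]
    [FiniteDimensional ℝ X] (A B : X → Set X)
    (hA : IsMaxMonotoneOp A) (hB : IsMaxMonotoneOp B)
    (hA3 : Is3StarMonotoneOp A) (hB3 : Is3StarMonotoneOp B)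
    (JA JB : X → X) (hJA : IsResolventOf JA A) (hJB : IsResolventOf JB B) :
    NearEq (Set.range (drT JA JB))
      ((svDom A - svRan B) ∩ (svRan A + svDom B)) := by
  obtain ⟨hmA, -⟩ := hA
  obtain ⟨hmB, -⟩ := hB
  have hSD : Set.range (drT JA JB) ⊆ (svDom A - svRan B) ∩ (svRan A + svDom B) := by
    rintro y ⟨x, rfl⟩
    exact drT_mem_target hJA hJB x
  have hDcl := target_subset_closure hmA hmB hA3 hB3 hJA hJB
  have hSsubE := subset_convexHull ℝ (Set.range (drT JA JB))
  have hEcl := hull_subset_closure hmA hmB hJA hJB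
  have hri := ri_hull_subset_range hmA hmB hJA hJB
  have hconv : Convex ℝ (convexHull ℝ (Set.range (drT JA JB))) := convex_convexHull ℝ _
  have hEne : (convexHull ℝ (Set.range (drT JA JB))).Nonempty :=
    ⟨drT JA JB 0, hSsubE (Set.mem_range_self 0)⟩
  constructor
  · refine Set.Subset.antisymm (closure_mono hSD) (closure_minimal hDcl isClosed_closure)
  · have h1 := intrinsicInterior_eq_of_sandwich hconv hEne hri
      (hSsubE.trans subset_closure)
    have h2 := intrinsicInterior_eq_of_sandwich hconv hEne (hri.trans hSD)
      (hDcl.trans (closure_mono hSsubE))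
    rw [h1, h2]
end

section
/- Let A : X ⇒ X and B : X ⇒ X be maximally monotone operators that are both 3* monotone, and set D = dom A − dom B, R = ran A + ran B. Then cl(ran(Id − T_{(A,B)})) = cl(D ∩ R) = cl D ∩ cl R, and the infimal displacement vector v_{(A,B)} (the minimal-norm element of cl(ran(Id − T_{(A,B)}))) equals the minimal-norm element of the closed convex set cl D ∩ cl R. -/
open Set Pointwise

section DRAux
variable {X : Type*} [NormedAddCommGroup X] [InnerProductSpace ℝ X]
local notation "⟪" x ", " y "⟫" => @inner ℝ _ _ x y

/-- The displacement map `Id - T`. -/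
noncomputable def dspM (JA JB : X → X) : X → X :=
  fun x => JA x - JB ((2 : ℝ) • JA x - x)

lemma dspM_eq (JA JB : X → X) (x : X) : x - drT JA JB x = dspM JA JB x := by
  simp only [drT, dspM]; abel

variable {A B : X → Set X} {JA JB : X → X}

lemma dspM_strong (hA : IsMonotoneOp A) (hB : IsMonotoneOp B)
    (hJA : IsResolventOf JA A) (hJB : IsResolventOf JB B) (x y : X) :
    ⟪dspM JA JB x - dspM JA JB y, dspM JA JB x - dspM JA JB y⟫ ≤
      ⟪x - y, dspM JA JB x - dspM JA JB y⟫ := by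
  have h1 : (0:ℝ) ≤ ⟪JA x - JA y, (x - JA x) - (y - JA y)⟫ := hA (hJA x) (hJA y)
  have h2 : (0:ℝ) ≤ ⟪JB ((2:ℝ) • JA x - x) - JB ((2:ℝ) • JA y - y),
      (((2:ℝ) • JA x - x) - JB ((2:ℝ) • JA x - x)) -
        (((2:ℝ) • JA y - y) - JB ((2:ℝ) • JA y - y))⟫ := hB (hJB _) (hJB _)
  simp only [dspM]
  set p := JA x with hp
  set q := JA y with hq
  set p' := JB ((2:ℝ) • p - x) with hp'
  set q' := JB ((2:ℝ) • q - y) with hq'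
  simp only [inner_sub_left, inner_sub_right, real_inner_smul_left, real_inner_smul_right] at *
  ring_nf at *
  linarith [real_inner_comm x y, real_inner_comm x p, real_inner_comm x q,
    real_inner_comm x p', real_inner_comm x q', real_inner_comm y p, real_inner_comm y q,
    real_inner_comm y p', real_inner_comm y q', real_inner_comm p q, real_inner_comm p p',
    real_inner_comm p q', real_inner_comm q p', real_inner_comm q q', real_inner_comm p' q']

lemma dspM_mono (hA : IsMonotoneOp A) (hB : IsMonotoneOp B)
    (hJA : IsResolventOf JA A) (hJB : IsResolventOf JB B) (x y : X) :
    0 ≤ ⟪x - y, dspM JA JB x - dspM JA JB y⟫ :=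
  le_trans real_inner_self_nonneg (dspM_strong hA hB hJA hJB x y)

lemma dspM_lip (hA : IsMonotoneOp A) (hB : IsMonotoneOp B)
    (hJA : IsResolventOf JA A) (hJB : IsResolventOf JB B) (x y : X) :
    ‖dspM JA JB x - dspM JA JB y‖ ≤ ‖x - y‖ := by
  have h := dspM_strong hA hB hJA hJB x y
  set Δ := dspM JA JB x - dspM JA JB y
  have h2 : ⟪x - y, Δ⟫ ≤ ‖x - y‖ * ‖Δ‖ := real_inner_le_norm _ _
  have h3 : ⟪Δ, Δ⟫ = ‖Δ‖ * ‖Δ‖ := real_inner_self_eq_norm_mul_norm _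
  rcases (norm_nonneg Δ).eq_or_lt' with h0 | h0
  · rw [h0]; exact norm_nonneg _
  · nlinarith

lemma JA_nonexp (hA : IsMonotoneOp A) (hJA : IsResolventOf JA A) (x y : X) :
    ‖JA x - JA y‖ ≤ ‖x - y‖ := by
  have h1 : (0:ℝ) ≤ ⟪JA x - JA y, (x - JA x) - (y - JA y)⟫ := hA (hJA x) (hJA y)
  have h2 : ⟪JA x - JA y, x - y⟫ ≤ ‖JA x - JA y‖ * ‖x - y‖ := real_inner_le_norm _ _
  have h3 : ⟪JA x - JA y, JA x - JA y⟫ = ‖JA x - JA y‖ * ‖JA x - JA y‖ :=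
    real_inner_self_eq_norm_mul_norm _
  have h4 : ⟪JA x - JA y, (x - JA x) - (y - JA y)⟫
      = ⟪JA x - JA y, x - y⟫ - ⟪JA x - JA y, JA x - JA y⟫ := by
    rw [← inner_sub_right]; congr 1; abel
  rcases (norm_nonneg (JA x - JA y)).eq_or_lt' with h0 | h0
  · rw [h0]; exact norm_nonneg _
  · nlinarith


set_option maxHeartbeats 1000000 in
lemma dspM_surj [FiniteDimensional ℝ X] (hA : IsMonotoneOp A) (hB : IsMonotoneOp B)
    (hJA : IsResolventOf JA A) (hJB : IsResolventOf JB B)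
    {lam : ℝ} (hlam : 0 < lam) (c : X) :
    ∃ x : X, lam • x + dspM JA JB x = c := by
  classical
  haveI : Nonempty X := ⟨0⟩
  set M := dspM JA JB with hM
  have hc1pos : (0:ℝ) < 1 + lam ^ 2 := by positivity
  set t : ℝ := lam / (1 + lam ^ 2) with ht
  have htpos : 0 < t := by positivity
  set G : X → X := fun x => x - t • (lam • x + M x - c) with hG
  set k : ℝ := 1 / Real.sqrt (1 + lam ^ 2) with hk
  have hsqrtpos : 0 < Real.sqrt (1 + lam ^ 2) := Real.sqrt_pos.2 hc1pos
  have hkpos : 0 < k := by positivity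
  have hklt : k < 1 := by
    rw [hk, div_lt_one hsqrtpos]
    nlinarith [Real.sq_sqrt hc1pos.le, Real.sqrt_nonneg (1 + lam ^ 2), hlam]
  have hdist : ∀ x y : X, ‖G x - G y‖ ≤ k * ‖x - y‖ := by
    intro x y
    have hGxy : G x - G y = (1 - t * lam) • (x - y) - t • (M x - M y) := by
      simp only [hG, smul_sub, smul_add, sub_smul, one_smul, smul_smul]
      abel
    set d := x - y with hd
    set Δ := M x - M y with hΔ
    have hji : ⟪Δ, Δ⟫ ≤ ⟪d, Δ⟫ := dspM_strong hA hB hJA hJB x y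
    have hj0 : (0:ℝ) ≤ ⟪Δ, Δ⟫ := real_inner_self_nonneg
    have hs0 : (0:ℝ) ≤ ⟪d, d⟫ := real_inner_self_nonneg
    have hcs : ⟪d, Δ⟫ * ⟪d, Δ⟫ ≤ ⟪d, d⟫ * ⟪Δ, Δ⟫ := real_inner_mul_inner_self_le _ _
    have hjs : ⟪Δ, Δ⟫ ≤ ⟪d, d⟫ := by nlinarith
    have he : ‖G x - G y‖ ^ 2
        = (⟪d,d⟫ - 2*lam*⟪d,Δ⟫ + lam^2*⟪Δ,Δ⟫) / (1 + lam ^ 2)^2 := by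
      rw [hGxy, ← real_inner_self_eq_norm_sq]
      simp only [inner_sub_left, inner_sub_right, real_inner_smul_left, real_inner_smul_right]
      rw [real_inner_comm Δ d, ht]
      field_simp
      ring
    have hnum : ⟪d,d⟫ - 2*lam*⟪d,Δ⟫ + lam^2*⟪Δ,Δ⟫ ≤ ⟪d,d⟫ * (1 + lam^2) := by
      nlinarith [mul_nonneg (mul_nonneg hlam.le hlam.le) (sub_nonneg.2 hjs),
        mul_nonneg hlam.le (sub_nonneg.2 hji)]
    have hsq : ‖G x - G y‖ ^ 2 ≤ k ^ 2 * ‖d‖ ^ 2 := by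
      have hk2 : k ^ 2 = 1 / (1 + lam ^ 2) := by
        rw [hk, div_pow, one_pow, Real.sq_sqrt hc1pos.le]
      rw [he, hk2, ← real_inner_self_eq_norm_sq]
      rw [div_le_iff₀ (by positivity)]
      calc ⟪d,d⟫ - 2*lam*⟪d,Δ⟫ + lam^2*⟪Δ,Δ⟫ ≤ ⟪d,d⟫ * (1 + lam^2) := hnum
        _ = 1 / (1 + lam ^ 2) * ⟪d,d⟫ * (1 + lam ^ 2) ^ 2 := by field_simp
    have h2 : ‖G x - G y‖ ≤ k * ‖d‖ := by
      have h3 := Real.sqrt_le_sqrt hsq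
      rw [Real.sqrt_sq (norm_nonneg _)] at h3
      rwa [show k^2*‖d‖^2 = (k*‖d‖)^2 by ring, Real.sqrt_sq (by positivity)] at h3
    exact h2
  have hlip : LipschitzWith (Real.toNNReal k) G := by
    apply LipschitzWith.of_dist_le_mul
    intro x y
    rw [dist_eq_norm, dist_eq_norm, Real.coe_toNNReal k hkpos.le]
    exact hdist x y
  have hcontr : ContractingWith (Real.toNNReal k) G :=
    ⟨by rw [← Real.toNNReal_one]; exact (Real.toNNReal_lt_toNNReal_iff one_pos).2 hklt, hlip⟩
  refine ⟨hcontr.fixedPoint G, ?_⟩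
  have hx : G (hcontr.fixedPoint G) = hcontr.fixedPoint G := hcontr.fixedPoint_isFixedPt
  set x := hcontr.fixedPoint G
  have h0 : t • (lam • x + M x - c) = 0 := by
    have := hx
    simp only [hG] at this
    rwa [sub_eq_self] at this
  have h1 : lam • x + M x - c = 0 := by
    rcases smul_eq_zero.1 h0 with h | h
    · exact absurd h (ne_of_gt htpos)
    · exact h
  exact eq_of_sub_eq_zero h1


set_option maxHeartbeats 1000000 in
lemma key_closure [FiniteDimensional ℝ X] (hA : IsMonotoneOp A) (hB : IsMonotoneOp B)
    (hJA : IsResolventOf JA A) (hJB : IsResolventOf JB B) (w : X)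
    (hprem : ∀ ε : ℝ, 0 < ε → ∃ (xb : X) (C K : ℝ), 0 ≤ K ∧
      ∀ x : X, ⟪w - dspM JA JB x, x - xb⟫ ≤ C + ε * ‖x - xb‖ + K * ‖dspM JA JB x‖) :
    w ∈ closure (Set.range (dspM JA JB)) := by
  rw [Metric.mem_closure_iff]
  intro δ hδ
  obtain ⟨xb, C, K, hK, hbound⟩ := hprem (δ/4) (by positivity)
  set M := dspM JA JB with hM
  set ρ : ℝ := ‖w - M xb‖ with hρ
  have hρ0 : 0 ≤ ρ := norm_nonneg _
  set C' : ℝ := C + K * (‖w‖ + ρ) with hC'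
  set B0 : ℝ := max C' 0 with hB0
  have hB00 : 0 ≤ B0 := le_max_right _ _
  set lam : ℝ := min 1 (δ^2/(16*(B0+1))) with hlam
  have hlampos : 0 < lam := lt_min one_pos (by positivity)
  obtain ⟨x, hx⟩ := dspM_surj hA hB hJA hJB hlampos (w + lam • xb)
  rw [← hM] at hx
  have heq : w - M x = lam • (x - xb) := by
    have hMx : M x = w + lam • xb - lam • x := by rw [← hx]; abel
    rw [hMx, smul_sub]; abel
  set r : ℝ := ‖x - xb‖ with hr
  have hr0 : 0 ≤ r := norm_nonneg _
  have hnorm : ‖w - M x‖ = lam * r := by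
    rw [heq, norm_smul, Real.norm_eq_abs, abs_of_pos hlampos]
  have hinner : ⟪w - M x, x - xb⟫ = lam * r^2 := by
    rw [heq, real_inner_smul_left, real_inner_self_eq_norm_sq]
  -- a priori bound : lam * r ≤ ρ
  have hmono : ⟪M xb - M x, x - xb⟫ ≤ 0 := by
    have h := dspM_mono hA hB hJA hJB xb x
    rw [← hM] at h
    have : ⟪M xb - M x, x - xb⟫ = -⟪xb - x, M xb - M x⟫ := by
      rw [real_inner_comm]
      rw [show x - xb = -(xb - x) by abel, inner_neg_left]
    rw [this]
    linarith
  have hsplit : ⟪w - M x, x - xb⟫ = ⟪w - M xb, x - xb⟫ + ⟪M xb - M x, x - xb⟫ := by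
    rw [← inner_add_left]; congr 1; abel
  have hprior : lam * r^2 ≤ ρ * r := by
    rw [← hinner, hsplit]
    have := real_inner_le_norm (w - M xb) (x - xb)
    rw [← hρ, ← hr] at this
    linarith
  have hlamr : lam * r ≤ ρ := by
    rcases hr0.eq_or_lt' with h0 | h0
    · nlinarith [hρ0]
    · nlinarith [hprior]
  have hMxb : ‖M x‖ ≤ ‖w‖ + ρ := by
    have : M x = w - lam • (x - xb) := by rw [← heq]; abel
    rw [this]
    calc ‖w - lam • (x - xb)‖ ≤ ‖w‖ + ‖lam • (x - xb)‖ := norm_sub_le _ _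
      _ ≤ ‖w‖ + ρ := by
          rw [norm_smul, Real.norm_eq_abs, abs_of_pos hlampos, ← hr]
          linarith
  -- main bound
  have hmain : lam * r^2 ≤ C' + (δ/4) * r := by
    rw [← hinner]
    have h1 := hbound x
    rw [← hr] at h1
    have h2 : K * ‖M x‖ ≤ K * (‖w‖ + ρ) := mul_le_mul_of_nonneg_left hMxb hK
    rw [hC']
    linarith
  set m : ℝ := lam * r with hm
  have hm0 : 0 ≤ m := mul_nonneg hlampos.le hr0
  have hmsq : m^2 ≤ lam * B0 + (δ/4) * m := by
    have : m^2 = lam * (lam * r^2) := by rw [hm]; ring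
    rw [this]
    have h1 : lam * (lam * r^2) ≤ lam * (C' + (δ/4)*r) :=
      mul_le_mul_of_nonneg_left hmain hlampos.le
    have h2 : lam * C' ≤ lam * B0 := mul_le_mul_of_nonneg_left (le_max_left _ _) hlampos.le
    calc lam * (lam * r^2) ≤ lam * (C' + (δ/4)*r) := h1
      _ = lam * C' + (δ/4) * m := by rw [hm]; ring
      _ ≤ lam * B0 + (δ/4) * m := by linarith
  set s : ℝ := Real.sqrt (lam * B0) with hs
  have hs0 : 0 ≤ s := Real.sqrt_nonneg _
  have hss : s^2 = lam * B0 := Real.sq_sqrt (by positivity)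
  have hmles : m ≤ δ/4 + s := by
    by_contra hcon
    push_neg at hcon
    nlinarith
  have hsδ : s ≤ δ/4 := by
    have h1 : lam * B0 ≤ (δ^2/(16*(B0+1))) * B0 :=
      mul_le_mul_of_nonneg_right (min_le_right _ _) hB00
    have h2 : (δ^2/(16*(B0+1))) * B0 ≤ (δ/4)^2 := by
      rw [div_mul_eq_mul_div, div_le_iff₀ (by positivity)]
      nlinarith
    have h3 : lam * B0 ≤ (δ/4)^2 := le_trans h1 h2
    calc s = Real.sqrt (lam * B0) := hs
      _ ≤ Real.sqrt ((δ/4)^2) := Real.sqrt_le_sqrt h3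
      _ = δ/4 := Real.sqrt_sq (by positivity)
  refine ⟨M x, ⟨x, rfl⟩, ?_⟩
  rw [dist_eq_norm, hnorm]
  calc m ≤ δ/4 + s := hmles
    _ ≤ δ/4 + δ/4 := by linarith
    _ < δ := by linarith


lemma inner_key_identity (a u b abar bbar us vs w : X) :
    ⟪w - (a-b), (a+u) - (abar+us)⟫ =
      -⟪abar - a, us - u⟫ - ⟪bbar - b, vs - (a-b-u)⟫
      + ⟪w - (us+vs), (a+u) - (abar+us)⟫
      + ⟪vs - (a-b-u), (w - (abar-bbar)) - (w - (us+vs))⟫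
      - ⟪(us-u)+(vs-(a-b-u)), (us-u)+(vs-(a-b-u))⟫ := by
  simp only [inner_sub_left, inner_sub_right, inner_add_left, inner_add_right]
  ring_nf
  linarith [real_inner_comm a u, real_inner_comm a b, real_inner_comm a abar, real_inner_comm a bbar,
    real_inner_comm a us, real_inner_comm a vs, real_inner_comm a w,
    real_inner_comm u b, real_inner_comm u abar, real_inner_comm u bbar, real_inner_comm u us,
    real_inner_comm u vs, real_inner_comm u w,
    real_inner_comm b abar, real_inner_comm b bbar, real_inner_comm b us, real_inner_comm b vs,
    real_inner_comm b w,
    real_inner_comm abar bbar, real_inner_comm abar us, real_inner_comm abar vs, real_inner_comm abar w,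
    real_inner_comm bbar us, real_inner_comm bbar vs, real_inner_comm bbar w,
    real_inner_comm us vs, real_inner_comm us w, real_inner_comm vs w]

set_option maxHeartbeats 1000000 in
lemma prem_clDR (hA : IsMonotoneOp A) (hB : IsMonotoneOp B)
    (hA3 : Is3StarMonotoneOp A) (hB3 : Is3StarMonotoneOp B)
    (hJA : IsResolventOf JA A) (hJB : IsResolventOf JB B) (w : X)
    (hw1 : w ∈ closure (svDom A - svDom B)) (hw2 : w ∈ closure (svRan A + svRan B))
    {ε : ℝ} (hε : 0 < ε) :
    ∃ (xb : X) (C K : ℝ), 0 ≤ K ∧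
      ∀ x : X, ⟪w - dspM JA JB x, x - xb⟫ ≤ C + ε * ‖x - xb‖ + K * ‖dspM JA JB x‖ := by
  set ε' : ℝ := ε/5 with hε'def
  have hε' : 0 < ε' := by positivity
  rw [Metric.mem_closure_iff] at hw1 hw2
  obtain ⟨d, hdD, hd⟩ := hw1 ε' hε'
  obtain ⟨abar, habar, bbar, hbbar, hdeq⟩ := Set.mem_sub.1 hdD
  obtain ⟨rr, hrR, hrr⟩ := hw2 ε' hε'
  obtain ⟨ra, hra, rb, hrb, hreq⟩ := Set.mem_add.1 hrR
  obtain ⟨LA, hLA⟩ := hA3 abar habar ra hra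
  obtain ⟨LB, hLB⟩ := hB3 bbar hbbar rb hrb
  have hδ1 : ‖w - (abar - bbar)‖ ≤ ε' := by
    rw [hdeq]; rw [dist_eq_norm] at hd; exact hd.le
  have hδ2 : ‖w - (ra + rb)‖ ≤ ε' := by
    rw [hreq]; rw [dist_eq_norm] at hrr; exact hrr.le
  set xb : X := abar + ra with hxb
  set c0 : ℝ := ‖xb - JA xb‖ with hc0
  have hc00 : 0 ≤ c0 := norm_nonneg _
  refine ⟨xb, -LA - LB + 2*ε'*(‖rb‖ + c0), 2*ε', by positivity, ?_⟩
  intro x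
  set a : X := JA x with ha
  set u : X := x - JA x with hu
  have hua : u ∈ A a := hJA x
  set b : X := JB ((2:ℝ) • a - x) with hb
  set vv : X := (2:ℝ) • a - x - b with hvv
  have hvb : vv ∈ B b := hJB _
  have hMx : dspM JA JB x = a - b := rfl
  have hxeq : x = a + u := by rw [ha, hu]; abel
  have hveq : vv = a - b - u := by rw [hvv, hu, two_smul]; abel
  set nx : ℝ := ‖x - xb‖ with hnx
  have hnx0 : 0 ≤ nx := norm_nonneg _
  -- 3* bounds
  have h3A : LA ≤ ⟪abar - a, ra - u⟫ := hLA ⟨a, u, hua, rfl⟩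
  have h3B : LB ≤ ⟪bbar - b, rb - (a - b - u)⟫ := by
    have := hLB ⟨b, vv, hvb, rfl⟩
    rwa [hveq] at this
  -- δ₂ term
  have hI3 : ⟪w - (ra+rb), (a+u) - (abar+ra)⟫ ≤ ε' * nx := by
    calc ⟪w - (ra+rb), (a+u) - (abar+ra)⟫
        ≤ ‖w - (ra+rb)‖ * ‖(a+u) - (abar+ra)‖ := real_inner_le_norm _ _
      _ ≤ ε' * nx := by
          rw [hnx, hxb]
          rw [← hxeq]
          exact mul_le_mul_of_nonneg_right hδ2 (norm_nonneg _)
  -- cross term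
  have hunorm : ‖u‖ ≤ 2*nx + c0 := by
    have h1 : (u : X) = (x - xb) + ((xb - JA xb) + (JA xb - JA x)) := by rw [hu]; abel
    calc ‖u‖ ≤ ‖x - xb‖ + ‖(xb - JA xb) + (JA xb - JA x)‖ := by rw [h1]; exact norm_add_le _ _
      _ ≤ ‖x - xb‖ + (‖xb - JA xb‖ + ‖JA xb - JA x‖) := by
          exact add_le_add_right (norm_add_le _ _) _
      _ ≤ nx + (c0 + nx) := by
          refine add_le_add le_rfl (add_le_add le_rfl ?_)
          calc ‖JA xb - JA x‖ ≤ ‖xb - x‖ := JA_nonexp hA hJA _ _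
            _ = nx := by rw [hnx, norm_sub_rev]
      _ = 2*nx + c0 := by ring
  have hnv : ‖rb - (a-b-u)‖ ≤ ‖rb‖ + (‖a-b‖ + (2*nx + c0)) := by
    calc ‖rb - (a-b-u)‖ ≤ ‖rb‖ + ‖a-b-u‖ := norm_sub_le _ _
      _ ≤ ‖rb‖ + (‖a-b‖ + ‖u‖) := add_le_add le_rfl (norm_sub_le _ _)
      _ ≤ ‖rb‖ + (‖a-b‖ + (2*nx + c0)) := add_le_add le_rfl (add_le_add le_rfl hunorm)
  have hI4 : ⟪rb - (a-b-u), (w - (abar-bbar)) - (w - (ra+rb))⟫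
      ≤ 2*ε'*(‖rb‖ + (‖a-b‖ + (2*nx + c0))) := by
    calc ⟪rb - (a-b-u), (w - (abar-bbar)) - (w - (ra+rb))⟫
        ≤ ‖rb - (a-b-u)‖ * ‖(w - (abar-bbar)) - (w - (ra+rb))‖ := real_inner_le_norm _ _
      _ ≤ ‖rb - (a-b-u)‖ * (2*ε') := by
          refine mul_le_mul_of_nonneg_left ?_ (norm_nonneg _)
          calc ‖(w - (abar-bbar)) - (w - (ra+rb))‖
              ≤ ‖w - (abar-bbar)‖ + ‖w - (ra+rb)‖ := norm_sub_le _ _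
            _ ≤ 2*ε' := by linarith
      _ ≤ (‖rb‖ + (‖a-b‖ + (2*nx + c0))) * (2*ε') :=
          mul_le_mul_of_nonneg_right hnv (by positivity)
      _ = 2*ε'*(‖rb‖ + (‖a-b‖ + (2*nx + c0))) := by ring
  have hI5 : (0:ℝ) ≤ ⟪(ra-u)+(rb-(a-b-u)), (ra-u)+(rb-(a-b-u))⟫ := real_inner_self_nonneg
  have hid := inner_key_identity a u b abar bbar ra rb w
  have hgoal : ⟪w - (a-b), (a+u) - (abar+ra)⟫
      ≤ (-LA - LB + 2*ε'*(‖rb‖ + c0)) + ε * nx + (2*ε') * ‖a-b‖ := by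
    rw [hid]
    have h5 : ε = 5 * ε' := by rw [hε'def]; ring
    rw [h5]
    linarith [h3A, h3B, hI3, hI4, hI5]
  have e1 : x - xb = (a+u) - (abar+ra) := by rw [hxb, ← hxeq]
  rw [hMx, e1]
  exact hgoal


lemma dspM_mono' (hA : IsMonotoneOp A) (hB : IsMonotoneOp B)
    (hJA : IsResolventOf JA A) (hJB : IsResolventOf JB B) (x y : X) :
    ⟪dspM JA JB y - dspM JA JB x, x - y⟫ ≤ 0 := by
  have h := dspM_mono hA hB hJA hJB y x
  have e : ⟪dspM JA JB y - dspM JA JB x, x - y⟫ = -⟪y - x, dspM JA JB y - dspM JA JB x⟫ := by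
    rw [real_inner_comm, show x - y = -(y - x) by abel, inner_neg_left]
  rw [e]
  linarith

set_option maxHeartbeats 1000000 in
lemma prem_mid (hA : IsMonotoneOp A) (hB : IsMonotoneOp B)
    (hJA : IsResolventOf JA A) (hJB : IsResolventOf JB B) (v0 v1 : X)
    (h0 : v0 ∈ closure (Set.range (dspM JA JB)))
    (h1 : v1 ∈ closure (Set.range (dspM JA JB)))
    {ε : ℝ} (hε : 0 < ε) :
    ∃ (xb : X) (C K : ℝ), 0 ≤ K ∧
      ∀ x : X, ⟪(2:ℝ)⁻¹ • (v0 + v1) - dspM JA JB x, x - xb⟫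
        ≤ C + ε * ‖x - xb‖ + K * ‖dspM JA JB x‖ := by
  rw [Metric.mem_closure_iff] at h0 h1
  obtain ⟨y0, hy0mem, hy0⟩ := h0 ε hε
  obtain ⟨x0, hx0⟩ := hy0mem
  obtain ⟨y1, hy1mem, hy1⟩ := h1 ε hε
  obtain ⟨x1, hx1⟩ := hy1mem
  set M := dspM JA JB with hM
  have hd0 : ‖v0 - M x0‖ ≤ ε := by
    rw [hx0]; rw [dist_eq_norm] at hy0; exact hy0.le
  have hd1 : ‖v1 - M x1‖ ≤ ε := by
    rw [hx1]; rw [dist_eq_norm] at hy1; exact hy1.le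
  refine ⟨x0, 2⁻¹*(‖M x1‖*‖x1 - x0‖), 2⁻¹*‖x1 - x0‖, by positivity, ?_⟩
  intro x
  set n : ℝ := ‖x - x0‖ with hn
  have hn0 : 0 ≤ n := norm_nonneg _
  have hsplit : ⟪(2:ℝ)⁻¹ • (v0 + v1) - M x, x - x0⟫
      = 2⁻¹ * ⟪v0 - M x, x - x0⟫ + 2⁻¹ * ⟪v1 - M x, x - x0⟫ := by
    have e : (2:ℝ)⁻¹ • (v0 + v1) - M x
        = (2:ℝ)⁻¹ • (v0 - M x) + (2:ℝ)⁻¹ • (v1 - M x) := by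
      module
    rw [e, inner_add_left, real_inner_smul_left, real_inner_smul_left]
  have hb0 : ⟪v0 - M x, x - x0⟫ ≤ ε * n := by
    have e : ⟪v0 - M x, x - x0⟫ = ⟪v0 - M x0, x - x0⟫ + ⟪M x0 - M x, x - x0⟫ := by
      simp only [inner_sub_left]; ring
    rw [e]
    have h2 : ⟪M x0 - M x, x - x0⟫ ≤ 0 := dspM_mono' hA hB hJA hJB x x0
    have h3 : ⟪v0 - M x0, x - x0⟫ ≤ ε * n := by
      calc ⟪v0 - M x0, x - x0⟫ ≤ ‖v0 - M x0‖ * ‖x - x0‖ := real_inner_le_norm _ _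
        _ ≤ ε * n := by rw [← hn]; exact mul_le_mul_of_nonneg_right hd0 hn0
    linarith
  have hb1 : ⟪v1 - M x, x - x0⟫ ≤ ε * n + (‖M x1‖ + ‖M x‖) * ‖x1 - x0‖ := by
    have e : ⟪v1 - M x, x - x0⟫ = ⟪v1 - M x1, x - x0⟫ + ⟪M x1 - M x, x - x1⟫
        + ⟪M x1 - M x, x1 - x0⟫ := by
      simp only [inner_sub_left, inner_sub_right]; ring
    rw [e]
    have h2 : ⟪M x1 - M x, x - x1⟫ ≤ 0 := dspM_mono' hA hB hJA hJB x x1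
    have h3 : ⟪v1 - M x1, x - x0⟫ ≤ ε * n := by
      calc ⟪v1 - M x1, x - x0⟫ ≤ ‖v1 - M x1‖ * ‖x - x0‖ := real_inner_le_norm _ _
        _ ≤ ε * n := by rw [← hn]; exact mul_le_mul_of_nonneg_right hd1 hn0
    have h4 : ⟪M x1 - M x, x1 - x0⟫ ≤ (‖M x1‖ + ‖M x‖) * ‖x1 - x0‖ := by
      calc ⟪M x1 - M x, x1 - x0⟫ ≤ ‖M x1 - M x‖ * ‖x1 - x0‖ := real_inner_le_norm _ _
        _ ≤ (‖M x1‖ + ‖M x‖) * ‖x1 - x0‖ :=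
            mul_le_mul_of_nonneg_right (norm_sub_le _ _) (norm_nonneg _)
    linarith
  rw [hsplit]
  have : 2⁻¹ * ⟪v0 - M x, x - x0⟫ + 2⁻¹ * ⟪v1 - M x, x - x0⟫
      ≤ 2⁻¹*(ε*n) + 2⁻¹*(ε * n + (‖M x1‖ + ‖M x‖) * ‖x1 - x0‖) := by
    have := hb0; have := hb1
    nlinarith [hb0, hb1]
  calc 2⁻¹ * ⟪v0 - M x, x - x0⟫ + 2⁻¹ * ⟪v1 - M x, x - x0⟫
      ≤ 2⁻¹*(ε*n) + 2⁻¹*(ε * n + (‖M x1‖ + ‖M x‖) * ‖x1 - x0‖) := this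
    _ = 2⁻¹*(‖M x1‖*‖x1 - x0‖) + ε * n + (2⁻¹*‖x1 - x0‖) * ‖M x‖ := by ring

lemma ranM_subset (hJA : IsResolventOf JA A) (hJB : IsResolventOf JB B) :
    Set.range (dspM JA JB) ⊆ (svDom A - svDom B) ∩ (svRan A + svRan B) := by
  rintro y ⟨x, rfl⟩
  constructor
  · exact Set.sub_mem_sub ⟨x - JA x, hJA x⟩
      ⟨(2:ℝ) • JA x - x - JB ((2:ℝ) • JA x - x), hJB _⟩
  · have hmem : (x - JA x) + ((2:ℝ) • JA x - x - JB ((2:ℝ) • JA x - x))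
        ∈ svRan A + svRan B :=
      Set.add_mem_add (Set.mem_iUnion.2 ⟨JA x, hJA x⟩) (Set.mem_iUnion.2 ⟨_, hJB _⟩)
    have he : dspM JA JB x
        = (x - JA x) + ((2:ℝ) • JA x - x - JB ((2:ℝ) • JA x - x)) := by
      simp only [dspM]; rw [two_smul]; abel
    rw [he]; exact hmem

end DRAux

/-- For maximally monotone, 3* monotone `A, B` with `D = dom A - dom B`,
`R = ran A + ran B`: `cl (ran (Id - T_{(A,B)})) = cl (D ∩ R) = cl D ∩ cl R`, and the
infimal displacement vector (minimal-norm element of `cl (ran (Id - T_{(A,B)}))`)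
equals the minimal-norm element of `cl D ∩ cl R`. -/
theorem closure_ran_id_sub_drT_and_infDisp {X : Type*} [NormedAddCommGroup X]
    [InnerProductSpace ℝ X] [FiniteDimensional ℝ X] (A B : X → Set X)
    (hA : IsMaxMonotoneOp A) (hB : IsMaxMonotoneOp B)
    (hA3 : Is3StarMonotoneOp A) (hB3 : Is3StarMonotoneOp B)
    (JA JB : X → X) (hJA : IsResolventOf JA A) (hJB : IsResolventOf JB B)
    (v v' : X)
    (hv : v ∈ closure (Set.range fun x => x - drT JA JB x) ∧
      ∀ w ∈ closure (Set.range fun x => x - drT JA JB x), ‖v‖ ≤ ‖w‖)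
    (hv' : v' ∈ closure (svDom A - svDom B) ∩ closure (svRan A + svRan B) ∧
      ∀ w ∈ closure (svDom A - svDom B) ∩ closure (svRan A + svRan B), ‖v'‖ ≤ ‖w‖) :
    closure (Set.range fun x => x - drT JA JB x) =
        closure ((svDom A - svDom B) ∩ (svRan A + svRan B)) ∧
      closure ((svDom A - svDom B) ∩ (svRan A + svRan B)) =
        closure (svDom A - svDom B) ∩ closure (svRan A + svRan B) ∧
      v = v' := by
  obtain ⟨hAm, _⟩ := hA
  obtain ⟨hBm, _⟩ := hB
  have hfun : (fun x => x - drT JA JB x) = dspM JA JB := funext (dspM_eq JA JB)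
  rw [hfun] at hv ⊢
  have hsub : Set.range (dspM JA JB) ⊆ (svDom A - svDom B) ∩ (svRan A + svRan B) :=
    ranM_subset hJA hJB
  have hkey : ∀ w ∈ closure (svDom A - svDom B) ∩ closure (svRan A + svRan B),
      w ∈ closure (Set.range (dspM JA JB)) := fun w hw =>
    key_closure hAm hBm hJA hJB w
      (fun ε hε => prem_clDR hAm hBm hA3 hB3 hJA hJB w hw.1 hw.2 hε)
  have h1 : closure (Set.range (dspM JA JB))
      = closure ((svDom A - svDom B) ∩ (svRan A + svRan B)) := by
    apply Set.Subset.antisymm (closure_mono hsub)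
    exact closure_minimal
      (fun w hw => hkey w ⟨subset_closure hw.1, subset_closure hw.2⟩) isClosed_closure
  have h2 : closure ((svDom A - svDom B) ∩ (svRan A + svRan B))
      = closure (svDom A - svDom B) ∩ closure (svRan A + svRan B) := by
    apply Set.Subset.antisymm
    · exact closure_minimal
        (fun w hw => ⟨subset_closure hw.1, subset_closure hw.2⟩)
        (isClosed_closure.inter isClosed_closure)
    · intro w hw
      rw [← h1]; exact hkey w hw
  refine ⟨h1, h2, ?_⟩
  have hS : closure (Set.range (dspM JA JB))
      = closure (svDom A - svDom B) ∩ closure (svRan A + svRan B) := h1.trans h2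
  have hv1 : v ∈ closure (Set.range (dspM JA JB)) := hv.1
  have hv'1 : v' ∈ closure (Set.range (dspM JA JB)) := by rw [hS]; exact hv'.1
  have hmid : (2:ℝ)⁻¹ • (v + v') ∈ closure (Set.range (dspM JA JB)) :=
    key_closure hAm hBm hJA hJB _
      (fun ε hε => prem_mid hAm hBm hJA hJB v v' hv1 hv'1 hε)
  have hnorm2 : ‖v'‖ ≤ ‖v‖ := hv'.2 v (by rw [← hS]; exact hv1)
  have hnorm3 : ‖v‖ ≤ ‖(2:ℝ)⁻¹ • (v + v')‖ := hv.2 _ hmid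
  have hmn : ‖(2:ℝ)⁻¹ • (v + v')‖ = 2⁻¹ * ‖v + v'‖ := by
    rw [norm_smul]; norm_num
  have hpar := parallelogram_law_with_norm ℝ v v'
  have hsq : ‖v‖ * ‖v‖ ≤ (2⁻¹ * ‖v + v'‖) * (2⁻¹ * ‖v + v'‖) := by
    rw [← hmn]
    exact mul_self_le_mul_self (norm_nonneg _) hnorm3
  have h0 : ‖v - v'‖ * ‖v - v'‖ ≤ 0 := by nlinarith [hnorm2, norm_nonneg v, norm_nonneg v']
  have h00 : ‖v - v'‖ = 0 :=
    le_antisymm (by nlinarith [norm_nonneg (v - v')]) (norm_nonneg _)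
  exact sub_eq_zero.1 (norm_eq_zero.1 h00)
end
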